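/- Let p ≥ n ≥ 6 with p ≡ 1 (mod n−1). Then ex(p;T_n*) = (n−2)(p−1)/2. -/

import Mathlib

open SimpleGraph

/-- `G` contains a copy of `H` as a subgraph: there is an injective map
preserving adjacency. -/
def ContainsCopy {V : Type*} {W : Type*} (G : SimpleGraph V) (H : SimpleGraph W) : Prop :=
  ∃ f : W ↪ V, ∀ a b, H.Adj a b → G.Adj (f a) (f b)

/-- `exNum p H` is the maximal number of edges in a simple graph of order `p`
not containing a copy of `H`. -/
noncomputable def exNum (p : ℕ) {W : Type*} (H : SimpleGraph W) : ℕ :=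
  sSup {m : ℕ | ∃ G : SimpleGraph (Fin p), ¬ ContainsCopy G H ∧ Nat.card G.edgeSet = m}

/-- `exNum2 p H₁ H₂` is the maximal number of edges in a simple graph of order `p`
containing no copy of `H₁` and no copy of `H₂`. -/
noncomputable def exNum2 (p : ℕ) {W₁ W₂ : Type*} (H₁ : SimpleGraph W₁) (H₂ : SimpleGraph W₂) : ℕ :=
  sSup {m : ℕ | ∃ G : SimpleGraph (Fin p),
    ¬ ContainsCopy G H₁ ∧ ¬ ContainsCopy G H₂ ∧ Nat.card G.edgeSet = m}

/-- The tree `T_n` on vertices `v_0, …, v_{n-1}` with edges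
`v_0v_1, …, v_0v_{n-2}` and `v_{n-2}v_{n-1}`: the unique tree on `n` vertices
of maximal degree `n-2`. -/
def Tn (n : ℕ) : SimpleGraph (Fin n) :=
  SimpleGraph.fromRel (fun a b =>
    (a.val = 0 ∧ 1 ≤ b.val ∧ b.val ≤ n - 2) ∨ (a.val = n - 2 ∧ b.val = n - 1))

/-- The tree `T_n^*` on vertices `v_0, …, v_{n-1}` with edges
`v_0v_1, …, v_0v_{n-3}`, `v_{n-3}v_{n-2}` and `v_{n-2}v_{n-1}`. -/
def TnStar (n : ℕ) : SimpleGraph (Fin n) :=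
  SimpleGraph.fromRel (fun a b =>
    (a.val = 0 ∧ 1 ≤ b.val ∧ b.val ≤ n - 3) ∨ (a.val = n - 3 ∧ b.val = n - 2) ∨
    (a.val = n - 2 ∧ b.val = n - 1))

attribute [local instance] Classical.propDecidable

namespace Stmt10Aux

variable {p : ℕ}

noncomputable def dd (G : SimpleGraph (Fin p)) (s : Finset (Fin p)) (v : Fin p) : ℕ :=
  (s.filter (fun w => G.Adj v w)).card

noncomputable def Ds (G : SimpleGraph (Fin p)) (s : Finset (Fin p)) : ℕ :=
  ∑ v ∈ s, dd G s v

def Rin (G : SimpleGraph (Fin p)) (s : Finset (Fin p)) : Fin p → Fin p → Prop :=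
  Relation.ReflTransGen (fun a b => a ∈ s ∧ b ∈ s ∧ G.Adj a b)

def Conn (G : SimpleGraph (Fin p)) (s : Finset (Fin p)) : Prop :=
  ∀ a ∈ s, ∀ b ∈ s, Rin G s a b

variable {G : SimpleGraph (Fin p)} {s t : Finset (Fin p)} {v x y : Fin p}

lemma rin_symm (h : Rin G s x y) : Rin G s y x := by
  refine @Std.Symm.symm _ (Relation.ReflTransGen (fun a b => a ∈ s ∧ b ∈ s ∧ G.Adj a b))
    (@Relation.ReflTransGen.stdSymm _ _ ⟨?_⟩) _ _ h
  rintro a b ⟨ha, hb, hab⟩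
  exact ⟨hb, ha, hab.symm⟩

lemma rin_mem_right (hx : x ∈ s) (h : Rin G s x y) : y ∈ s := by
  induction h with
  | refl => exact hx
  | tail _ hbc _ => exact hbc.2.1

lemma dd_le_card_sub_one (hv : v ∈ s) : dd G s v ≤ s.card - 1 := by
  have h1 : (s.filter (fun w => G.Adj v w)) ⊆ s.erase v := by
    intro w hw
    rw [Finset.mem_filter] at hw
    exact Finset.mem_erase.2 ⟨fun h => G.loopless.irrefl v (h ▸ hw.2), hw.1⟩
  calc dd G s v ≤ (s.erase v).card := Finset.card_le_card h1
    _ = s.card - 1 := Finset.card_erase_of_mem hv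

lemma Ds_le (s : Finset (Fin p)) : Ds G s ≤ s.card * (s.card - 1) := by
  calc Ds G s ≤ ∑ _v ∈ s, (s.card - 1) := Finset.sum_le_sum (fun v hv => dd_le_card_sub_one hv)
    _ = s.card * (s.card - 1) := by rw [Finset.sum_const, smul_eq_mul]

lemma dd_congr (ht : t ⊆ s) (hcl : ∀ a ∈ t, ∀ b ∈ s, G.Adj a b → b ∈ t) (hv : v ∈ t) :
    dd G s v = dd G t v := by
  unfold dd
  congr 1
  apply Finset.Subset.antisymm
  · intro w hw
    rw [Finset.mem_filter] at hw ⊢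
    exact ⟨hcl v hv w hw.1 hw.2, hw.2⟩
  · exact Finset.filter_subset_filter _ ht

lemma Ds_split (ht : t ⊆ s) (hcl : ∀ a ∈ t, ∀ b ∈ s, G.Adj a b → b ∈ t) :
    Ds G s = Ds G t + Ds G (s \ t) := by
  have hcl' : ∀ a ∈ s \ t, ∀ b ∈ s, G.Adj a b → b ∈ s \ t := by
    intro a ha b hb hab
    rw [Finset.mem_sdiff] at ha ⊢
    refine ⟨hb, fun hbt => ha.2 (hcl b hbt a ha.1 hab.symm)⟩
  unfold Ds
  rw [← Finset.sum_sdiff ht]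
  rw [Finset.sum_congr rfl (fun a ha => dd_congr (Finset.sdiff_subset) hcl' ha),
    Finset.sum_congr (rfl : t = t) (fun a ha => dd_congr ht hcl ha)]
  ring

lemma dd_insert_of_not_adj (hvs : v ∉ s) (hna : ¬ G.Adj x v) :
    dd G (insert v s) x = dd G s x := by
  unfold dd
  rw [Finset.filter_insert, if_neg hna]

lemma dd_insert_of_adj (hvs : v ∉ s) (hna : G.Adj x v) :
    dd G (insert v s) x = dd G s x + 1 := by
  unfold dd
  rw [Finset.filter_insert, if_pos hna, Finset.card_insert_of_notMem]
  intro h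
  exact hvs (Finset.filter_subset _ _ h)

lemma Ds_insert (hvs : v ∉ s) : Ds G (insert v s) = Ds G s + 2 * dd G (insert v s) v := by
  have hddv : dd G (insert v s) v = dd G s v := dd_insert_of_not_adj hvs (G.loopless.irrefl v)
  have key : ∀ a ∈ s, dd G (insert v s) a = dd G s a + (if G.Adj a v then 1 else 0) := by
    intro a _
    by_cases h : G.Adj a v
    · rw [if_pos h]; exact dd_insert_of_adj hvs h
    · rw [if_neg h, add_zero]; exact dd_insert_of_not_adj hvs h
  have hsum : ∑ a ∈ s, (if G.Adj a v then 1 else 0) = dd G s v := by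
    unfold dd
    rw [Finset.card_filter]
    exact Finset.sum_congr rfl (fun a _ => by
      by_cases h : G.Adj a v
      · rw [if_pos h, if_pos h.symm]
      · rw [if_neg h, if_neg (fun h' => h h'.symm)])
  calc Ds G (insert v s) = dd G (insert v s) v + ∑ a ∈ s, dd G (insert v s) a := by
        unfold Ds; rw [Finset.sum_insert hvs]
    _ = dd G s v + (∑ a ∈ s, dd G s a + ∑ a ∈ s, (if G.Adj a v then 1 else 0)) := by
        rw [hddv, Finset.sum_congr rfl key, Finset.sum_add_distrib]
    _ = Ds G s + 2 * dd G (insert v s) v := by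
        rw [hsum, hddv]; unfold Ds; ring

lemma Ds_erase (hv : v ∈ s) : Ds G s = Ds G (s.erase v) + 2 * dd G s v := by
  have h := Ds_insert (G := G) (Finset.notMem_erase v s)
  rw [Finset.insert_erase hv] at h
  exact h


noncomputable def comp (G : SimpleGraph (Fin p)) (s : Finset (Fin p)) (x : Fin p) :
    Finset (Fin p) :=
  s.filter (fun y => Rin G s x y)

lemma comp_subset : comp G s x ⊆ s := Finset.filter_subset _ _

lemma mem_comp_self (hx : x ∈ s) : x ∈ comp G s x :=
  Finset.mem_filter.2 ⟨hx, Relation.ReflTransGen.refl⟩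

lemma comp_closed (ha : v ∈ comp G s x) (hb : y ∈ s) (hab : G.Adj v y) :
    y ∈ comp G s x := by
  have ha' := Finset.mem_filter.1 ha
  exact Finset.mem_filter.2 ⟨hb, ha'.2.tail ⟨ha'.1, hb, hab⟩⟩

lemma rin_comp (hx : x ∈ s) (h : Rin G s x y) : Rin G (comp G s x) x y := by
  induction h with
  | refl => exact Relation.ReflTransGen.refl
  | @tail b c hab hbc ih =>
      have hbcomp : b ∈ comp G s x := Finset.mem_filter.2 ⟨hbc.1, hab⟩
      have hccomp : c ∈ comp G s x := Finset.mem_filter.2 ⟨hbc.2.1, hab.tail hbc⟩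
      exact ih.tail ⟨hbcomp, hccomp, hbc.2.2⟩

lemma conn_comp (hx : x ∈ s) : Conn G (comp G s x) := by
  intro a ha b hb
  have ha' := Finset.mem_filter.1 ha
  have hb' := Finset.mem_filter.1 hb
  exact (rin_symm (rin_comp hx ha'.2)).trans (rin_comp hx hb'.2)

lemma exists_boundary (hConn : Conn G s) (ht : t ⊆ s) (hx : x ∈ t) (hy : y ∈ s)
    (hyt : y ∉ t) : ∃ u ∈ t, ∃ w ∈ s, w ∉ t ∧ G.Adj u w := by
  have key : ∀ b, Rin G s x b → b ∈ t ∨ ∃ u ∈ t, ∃ w ∈ s, w ∉ t ∧ G.Adj u w := by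
    intro b hb
    induction hb with
    | refl => exact Or.inl hx
    | @tail b c hab hbc ih =>
        rcases ih with h | h
        · by_cases hc : c ∈ t
          · exact Or.inl hc
          · exact Or.inr ⟨b, h, c, hbc.2.1, hc, hbc.2.2⟩
        · exact Or.inr h
  rcases key y (hConn x (ht hx) y hy) with h | h
  · exact absurd h hyt
  · exact h

/-- Lemma P : if every nonempty connected subset satisfies the additive bound, so does `s`. -/
lemma lemP {n : ℕ} :
    ∀ k (s : Finset (Fin p)), s.card ≤ k →
      (∀ t ⊆ s, t.Nonempty → Conn G t → Ds G t + (n - 2) ≤ (n - 2) * t.card) →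
      s.Nonempty → Ds G s + (n - 2) ≤ (n - 2) * s.card := by
  intro k
  induction k with
  | zero =>
      intro s hs _ hne
      rw [Finset.card_eq_zero.1 (Nat.le_zero.1 hs)] at hne
      exact absurd hne (by simp)
  | succ k ih =>
      intro s hs hall hne
      obtain ⟨x, hx⟩ := hne
      set t := comp G s x with htdef
      have hts : t ⊆ s := comp_subset
      have hxt : x ∈ t := mem_comp_self hx
      by_cases hd : s \ t = ∅
      · have hst : s = t := Finset.Subset.antisymm
          (fun a ha => by
            by_contra hat
            exact (Finset.eq_empty_iff_forall_notMem.1 hd a) (Finset.mem_sdiff.2 ⟨ha, hat⟩))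
          hts
        exact hall s (le_refl s) ⟨x, hx⟩ (hst ▸ conn_comp hx)
      · have hdne : (s \ t).Nonempty := Finset.nonempty_iff_ne_empty.2 hd
        have hcl : ∀ a ∈ t, ∀ b ∈ s, G.Adj a b → b ∈ t := fun a ha b hb hab =>
          comp_closed ha hb hab
        have hsplit := Ds_split hts hcl
        have hcards := Finset.card_sdiff_add_card_eq_card hts
        have htcard : 1 ≤ t.card := Finset.card_pos.2 ⟨x, hxt⟩
        have hdcard : 1 ≤ (s \ t).card := Finset.card_pos.2 hdne
        have h1 : Ds G t + (n - 2) ≤ (n - 2) * t.card :=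
          hall t hts ⟨x, hxt⟩ (conn_comp hx)
        have h2 : Ds G (s \ t) + (n - 2) ≤ (n - 2) * (s \ t).card := by
          refine ih (s \ t) ?_ (fun u hu => hall u (hu.trans Finset.sdiff_subset)) hdne
          have : t.card + (s \ t).card = s.card := by omega
          omega
        have hmul : (n - 2) * s.card = (n - 2) * t.card + (n - 2) * (s \ t).card := by
          rw [← Nat.mul_add]
          congr 1
          omega
        omega


/-- The embedding lemma: a star with `n-4` leaves plus a path of length 3 gives `T_n^*`. -/
lemma emb_lemma {n : ℕ} (hn : 6 ≤ n) (w0 x y z : Fin p) (L : Finset (Fin p))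
    (hL : L.card = n - 4)
    (hwx : w0 ≠ x) (hwy : w0 ≠ y) (hwz : w0 ≠ z) (hxy : x ≠ y) (hxz : x ≠ z) (hyz : y ≠ z)
    (hdisj : ∀ l ∈ L, l ≠ w0 ∧ l ≠ x ∧ l ≠ y ∧ l ≠ z)
    (hadjL : ∀ l ∈ L, G.Adj w0 l) (hWX : G.Adj w0 x) (hXY : G.Adj x y) (hYZ : G.Adj y z) :
    ContainsCopy G (TnStar n) := by
  set e := L.orderIsoOfFin hL with he
  set F : Fin n → Fin p := fun i =>
    if h0 : i.val = 0 then w0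
    else if h1 : i.val ≤ n - 4 then (e ⟨i.val - 1, by omega⟩ : Fin p)
    else if i.val = n - 3 then x
    else if i.val = n - 2 then y
    else z with hF
  have hF0 : ∀ i : Fin n, i.val = 0 → F i = w0 := by
    intro i h; rw [hF]; simp only; rw [dif_pos h]
  have hFleaf : ∀ (i : Fin n) (h0 : i.val ≠ 0) (h1 : i.val ≤ n - 4),
      F i = (e ⟨i.val - 1, by omega⟩ : Fin p) := by
    intro i h0 h1; rw [hF]; simp only; rw [dif_neg h0, dif_pos h1]
  have hFmem : ∀ (i : Fin n), i.val ≠ 0 → i.val ≤ n - 4 → F i ∈ L := by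
    intro i h0 h1
    rw [hFleaf i h0 h1]
    exact (e ⟨i.val - 1, by omega⟩).2
  have hFx : ∀ i : Fin n, i.val = n - 3 → F i = x := by
    intro i h; rw [hF]; simp only
    rw [dif_neg (by omega), dif_neg (by omega), if_pos h]
  have hFy : ∀ i : Fin n, i.val = n - 2 → F i = y := by
    intro i h; rw [hF]; simp only
    rw [dif_neg (by omega), dif_neg (by omega), if_neg (by omega), if_pos h]
  have hFz : ∀ i : Fin n, i.val = n - 1 → F i = z := by
    intro i h; rw [hF]; simp only
    rw [dif_neg (by omega), dif_neg (by omega), if_neg (by omega), if_neg (by omega)]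
  have hLinj : ∀ a b : Fin n, a.val ≠ 0 → a.val ≤ n - 4 → b.val ≠ 0 → b.val ≤ n - 4 →
      F a = F b → a = b := by
    intro a b ha0 ha1 hb0 hb1 hab
    rw [hFleaf a ha0 ha1, hFleaf b hb0 hb1] at hab
    have h2 := e.injective (Subtype.coe_injective hab)
    rw [Fin.mk.injEq] at h2
    exact Fin.ext (by omega)
  have key : ∀ i : Fin n, i.val = 0 ∨ (i.val ≠ 0 ∧ i.val ≤ n - 4) ∨ i.val = n - 3 ∨
      i.val = n - 2 ∨ i.val = n - 1 := by
    intro i; have := i.isLt; omega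
  have hinj : Function.Injective F := by
    intro a b hab
    rcases key a with ha | ⟨ha, ha'⟩ | ha | ha | ha <;>
      rcases key b with hb | ⟨hb, hb'⟩ | hb | hb | hb
    · exact Fin.ext (by omega)
    · rw [hF0 a ha] at hab
      exact absurd rfl (hab ▸ (hdisj _ (hFmem b hb hb')).1)
    · rw [hF0 a ha, hFx b hb] at hab; exact absurd hab hwx
    · rw [hF0 a ha, hFy b hb] at hab; exact absurd hab hwy
    · rw [hF0 a ha, hFz b hb] at hab; exact absurd hab hwz
    · rw [hF0 b hb] at hab
      exact absurd rfl (hab ▸ (hdisj _ (hFmem a ha ha')).1)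
    · exact hLinj a b ha ha' hb hb' hab
    · rw [hFx b hb] at hab; exact absurd hab (hdisj _ (hab ▸ hFmem a ha ha')).2.1
    · rw [hFy b hb] at hab; exact absurd hab (hdisj _ (hab ▸ hFmem a ha ha')).2.2.1
    · rw [hFz b hb] at hab; exact absurd hab (hdisj _ (hab ▸ hFmem a ha ha')).2.2.2
    · rw [hFx a ha, hF0 b hb] at hab; exact absurd hab.symm hwx
    · rw [hFx a ha] at hab
      exact absurd hab.symm (hdisj _ (hFmem b hb hb')).2.1
    · exact Fin.ext (by omega)
    · rw [hFx a ha, hFy b hb] at hab; exact absurd hab hxy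
    · rw [hFx a ha, hFz b hb] at hab; exact absurd hab hxz
    · rw [hFy a ha, hF0 b hb] at hab; exact absurd hab.symm hwy
    · rw [hFy a ha] at hab
      exact absurd hab.symm (hdisj _ (hFmem b hb hb')).2.2.1
    · rw [hFy a ha, hFx b hb] at hab; exact absurd hab.symm hxy
    · exact Fin.ext (by omega)
    · rw [hFy a ha, hFz b hb] at hab; exact absurd hab hyz
    · rw [hFz a ha, hF0 b hb] at hab; exact absurd hab.symm hwz
    · rw [hFz a ha] at hab
      exact absurd hab.symm (hdisj _ (hFmem b hb hb')).2.2.2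
    · rw [hFz a ha, hFx b hb] at hab; exact absurd hab.symm hxz
    · rw [hFz a ha, hFy b hb] at hab; exact absurd hab.symm hyz
    · exact Fin.ext (by omega)
  refine ⟨⟨F, hinj⟩, ?_⟩
  intro a b hadj
  have main : ∀ a b : Fin n,
      ((a.val = 0 ∧ 1 ≤ b.val ∧ b.val ≤ n - 3) ∨ (a.val = n - 3 ∧ b.val = n - 2) ∨
        (a.val = n - 2 ∧ b.val = n - 1)) → G.Adj (F a) (F b) := by
    rintro a b (⟨h0, h1, h2⟩ | ⟨h1, h2⟩ | ⟨h1, h2⟩)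
    · rw [hF0 a h0]
      by_cases hc : b.val ≤ n - 4
      · exact hadjL _ (hFmem b (by omega) hc)
      · have : b.val = n - 3 := by omega
        rw [hFx b this]; exact hWX
    · rw [hFx a h1, hFy b h2]; exact hXY
    · rw [hFy a h1, hFz b h2]; exact hYZ
  unfold TnStar at hadj
  rw [SimpleGraph.fromRel_adj] at hadj
  rcases hadj.2 with h | h
  · exact main a b h
  · exact (main b a h).symm


/-- Main structural lemma: a connected `T_n^*`-free set of at least `n` vertices
satisfies `Ds + (n-2) ≤ (n-2) * card`. -/
lemma lemD {n : ℕ} (hn : 6 ≤ n) (hfree : ¬ ContainsCopy G (TnStar n)) :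
    ∀ k (s : Finset (Fin p)), s.card ≤ k → Conn G s → n ≤ s.card →
      Ds G s + (n - 2) ≤ (n - 2) * s.card := by
  intro k
  induction k with
  | zero => intro s hs _ hcard; omega
  | succ k ih =>
    intro s hsk hconn hcard
    by_contra hb
    push_neg at hb
    apply hfree
    by_cases hcase : ∃ v ∈ s, 2 * dd G s v ≤ n - 2
    · -- Case 1 : a vertex of small degree
      obtain ⟨v, hv, hdv⟩ := hcase
      set s' := s.erase v with hs'
      have herase := Ds_erase (G := G) hv
      rw [← hs'] at herase
      have hs'card : s'.card = s.card - 1 := Finset.card_erase_of_mem hv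
      have hnb : ¬ (Ds G s' + (n - 2) ≤ (n - 2) * s'.card) := by
        intro hcon
        have hmul : (n - 2) * s.card = (n - 2) * s'.card + (n - 2) := by
          have h1 : s.card = s'.card + 1 := by omega
          rw [h1, Nat.mul_add, Nat.mul_one]
        omega
      have hnall : ¬ (∀ t ⊆ s', t.Nonempty → Conn G t →
          Ds G t + (n - 2) ≤ (n - 2) * t.card) := by
        intro hall
        exact hnb (lemP s'.card s' le_rfl hall (Finset.card_pos.1 (by omega)))
      push_neg at hnall
      obtain ⟨t, hts', htne, htconn, htb⟩ := hnall
      have htcards' : t.card ≤ s'.card := Finset.card_le_card hts'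
      have hts : t ⊆ s := hts'.trans (Finset.erase_subset v s)
      have hDsle := Ds_le (G := G) t
      by_cases htn : n ≤ t.card
      · have := ih t (by omega) htconn htn
        omega
      · -- t.card = n - 1 : the dense case
        have htcard : t.card = n - 1 := by
          by_contra hne2
          obtain ⟨a, ha⟩ : ∃ a, t.card = a + 1 :=
            ⟨t.card - 1, by have := Finset.card_pos.2 htne; omega⟩
          have ha2 : a + 1 ≤ n - 2 := by omega
          have h3 : Ds G t ≤ (n - 2) * a := le_trans hDsle (by
            rw [ha]
            simp only [Nat.add_sub_cancel]
            exact Nat.mul_le_mul_right a ha2)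
          have hmt : (n - 2) * t.card = (n - 2) * a + (n - 2) := by
            rw [ha, Nat.mul_add, Nat.mul_one]
          omega
        -- the set of "full" vertices inside t
        set K := t.filter (fun v => dd G t v = n - 2) with hK
        have hfull : ∀ v ∈ K, ∀ w ∈ t, w ≠ v → G.Adj v w := by
          intro v hvK w hw hwv
          have hvt : v ∈ t := (Finset.mem_filter.1 hvK).1
          have hdd : dd G t v = n - 2 := (Finset.mem_filter.1 hvK).2
          have hsub : (t.filter (fun w => G.Adj v w)) ⊆ t.erase v := by
            intro u hu
            rw [Finset.mem_filter] at hu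
            exact Finset.mem_erase.2 ⟨fun h => G.loopless.irrefl v (h ▸ hu.2), hu.1⟩
          have hcards : (t.erase v).card ≤ (t.filter (fun w => G.Adj v w)).card := by
            rw [Finset.card_erase_of_mem hvt]
            have : (t.filter (fun w => G.Adj v w)).card = n - 2 := hdd
            omega
          have heq := Finset.eq_of_subset_of_card_le hsub hcards
          have : w ∈ t.filter (fun w => G.Adj v w) := by
            rw [heq]; exact Finset.mem_erase.2 ⟨hwv, hw⟩
          exact (Finset.mem_filter.1 this).2
        have hKcard : 2 ≤ K.card := by
          have hpt : ∀ v ∈ t, dd G t v ≤ (n - 3) + (if v ∈ K then 1 else 0) := by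
            intro v hvt
            by_cases h : v ∈ K
            · rw [if_pos h]
              have := dd_le_card_sub_one (G := G) hvt
              omega
            · rw [if_neg h]
              have h2 : dd G t v ≠ n - 2 := fun hc => h (Finset.mem_filter.2 ⟨hvt, hc⟩)
              have := dd_le_card_sub_one (G := G) hvt
              omega
          have hsum : Ds G t ≤ (n - 3) * t.card + K.card := by
            calc Ds G t ≤ ∑ v ∈ t, ((n - 3) + (if v ∈ K then 1 else 0)) :=
                  Finset.sum_le_sum hpt
              _ = (n - 3) * t.card + ∑ v ∈ t, (if v ∈ K then 1 else 0) := by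
                  rw [Finset.sum_add_distrib, Finset.sum_const, smul_eq_mul, Nat.mul_comm]
              _ = (n - 3) * t.card + K.card := by
                  congr 1
                  rw [Finset.sum_ite_mem, Finset.inter_eq_right.2 (Finset.filter_subset _ _),
                    Finset.sum_const, smul_eq_mul, Nat.mul_one]
          have hmul1 : (n - 2) * t.card = (n - 3) * t.card + t.card := by
            have h1 : n - 2 = (n - 3) + 1 := by omega
            rw [h1, Nat.add_mul, Nat.one_mul]
          omega
        obtain ⟨f1, hf1, f2, hf2, hf12⟩ := Finset.one_lt_card.1 (by omega : 1 < K.card)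
        -- a boundary edge
        have hstne : ∃ y0, y0 ∈ s \ t := by
          have := Finset.card_sdiff_add_card_eq_card hts
          have : 1 ≤ (s \ t).card := by omega
          exact Finset.card_pos.1 this
        obtain ⟨y0, hy0⟩ := hstne
        rw [Finset.mem_sdiff] at hy0
        obtain ⟨x0, hx0⟩ := htne
        obtain ⟨u, hut, w, hws, hwt, huw⟩ := exists_boundary hconn hts hx0 hy0.1 hy0.2
        -- choose the hub v0 and the connecting vertex xx
        have hKt : K ⊆ t := Finset.filter_subset _ _
        obtain ⟨v0, hv0K, hv0u, xx, hxxt, hxxu, hxxv0, hXU⟩ :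
            ∃ v0 ∈ K, v0 ≠ u ∧ ∃ xx ∈ t, xx ≠ u ∧ xx ≠ v0 ∧ G.Adj xx u := by
          by_cases hu : u ∈ K
          · -- u is full; pick any full v0 ≠ u and xx ∈ t \ {v0, u}
            obtain ⟨v0, hv0K, hv0u⟩ : ∃ v0 ∈ K, v0 ≠ u := by
              by_cases h : f1 = u
              · exact ⟨f2, hf2, fun hc => hf12 (h.trans hc.symm)⟩
              · exact ⟨f1, hf1, h⟩
            have hcard2 : 1 ≤ ((t.erase v0).erase u).card := by
              rw [Finset.card_erase_of_mem, Finset.card_erase_of_mem (hKt hv0K)]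
              · omega
              · exact Finset.mem_erase.2 ⟨Ne.symm hv0u, hut⟩
            obtain ⟨xx, hxx⟩ := Finset.card_pos.1 hcard2
            rw [Finset.mem_erase, Finset.mem_erase] at hxx
            exact ⟨v0, hv0K, hv0u, xx, hxx.2.2, hxx.1, hxx.2.1,
              (hfull u hu xx hxx.2.2 hxx.1).symm⟩
          · -- u not full : take the two full vertices
            have h1 : f1 ≠ u := fun hc => hu (hc ▸ hf1)
            have h2 : f2 ≠ u := fun hc => hu (hc ▸ hf2)
            exact ⟨f1, hf1, h1, f2, hKt hf2, h2, hf12.symm,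
              hfull f2 hf2 u hut (Ne.symm h2)⟩
        have hv0t : v0 ∈ t := hKt hv0K
        -- the leaves
        set L := ((t.erase v0).erase xx).erase u with hLdef
        have hLsub : L ⊆ t :=
          (Finset.erase_subset _ _).trans ((Finset.erase_subset _ _).trans
            (Finset.erase_subset _ _))
        have hLcard : L.card = n - 4 := by
          rw [hLdef, Finset.card_erase_of_mem, Finset.card_erase_of_mem,
            Finset.card_erase_of_mem hv0t, htcard]
          · omega
          · exact Finset.mem_erase.2 ⟨hxxv0, hxxt⟩
          · exact Finset.mem_erase.2 ⟨Ne.symm hxxu, Finset.mem_erase.2 ⟨Ne.symm hv0u, hut⟩⟩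
        refine emb_lemma hn v0 xx u w L hLcard (Ne.symm hxxv0) hv0u
          (fun hc => hwt (hc ▸ hv0t)) hxxu (fun hc => hwt (hc ▸ hxxt))
          (fun hc => hwt (hc ▸ hut)) ?_ ?_ ?_ hXU huw
        · intro l hl
          have hlt : l ∈ t := hLsub hl
          rw [hLdef, Finset.mem_erase, Finset.mem_erase, Finset.mem_erase] at hl
          exact ⟨hl.2.2.1, hl.2.1, hl.1, fun hc => hwt (hc ▸ hlt)⟩
        · intro l hl
          have hlt : l ∈ t := hLsub hl
          rw [hLdef, Finset.mem_erase, Finset.mem_erase, Finset.mem_erase] at hl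
          exact hfull v0 hv0K l hlt hl.2.2.1
        · exact hfull v0 hv0K xx hxxt hxxv0
    · -- Case 2 : minimum degree at least (n-1)/2
      push_neg at hcase
      have hdeg3 : ∀ v ∈ s, 3 ≤ dd G s v := by
        intro v hv
        have := hcase v hv
        omega
      -- a vertex of degree ≥ n - 2
      obtain ⟨v0, hv0s, hv0d⟩ : ∃ v0 ∈ s, n - 2 ≤ dd G s v0 := by
        by_contra hno
        push_neg at hno
        have hsum : Ds G s ≤ (n - 3) * s.card := by
          calc Ds G s ≤ ∑ _v ∈ s, (n - 3) :=
              Finset.sum_le_sum (fun v hv => by have := hno v hv; omega)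
            _ = (n - 3) * s.card := by rw [Finset.sum_const, smul_eq_mul, Nat.mul_comm]
        have hmul : (n - 2) * s.card = (n - 3) * s.card + s.card := by
          have h1 : n - 2 = (n - 3) + 1 := by omega
          rw [h1, Nat.add_mul, Nat.one_mul]
        omega
      set N := s.filter (fun w => G.Adj v0 w) with hNdef
      have hNcard : N.card = dd G s v0 := rfl
      have hNsub : N ⊆ s := Finset.filter_subset _ _
      have hv0N : v0 ∉ N := fun hc => G.loopless.irrefl v0 (Finset.mem_filter.1 hc).2
      have hmemN : ∀ l ∈ N, G.Adj v0 l := fun l hl => (Finset.mem_filter.1 hl).2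
      by_cases hd : n - 1 ≤ dd G s v0
      · -- large degree : any path of length 3 works
        obtain ⟨x, hxN⟩ : N.Nonempty := Finset.card_pos.1 (by omega)
        have hxs : x ∈ s := hNsub hxN
        have hv0x : G.Adj v0 x := hmemN x hxN
        obtain ⟨y, hy⟩ : ((s.filter (fun w => G.Adj x w)).erase v0).Nonempty := by
          apply Finset.card_pos.1
          have h1 : ((s.filter (fun w => G.Adj x w)).erase v0).card ≥
              (s.filter (fun w => G.Adj x w)).card - 1 := Finset.pred_card_le_card_erase
          have h3 := hdeg3 x hxs
          have : dd G s x = (s.filter (fun w => G.Adj x w)).card := rfl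
          omega
        rw [Finset.mem_erase, Finset.mem_filter] at hy
        obtain ⟨hyv0, hys, hxy⟩ := hy
        obtain ⟨z, hz⟩ : (((s.filter (fun w => G.Adj y w)).erase v0).erase x).Nonempty := by
          apply Finset.card_pos.1
          have h1 : ((s.filter (fun w => G.Adj y w)).erase v0).card ≥
              (s.filter (fun w => G.Adj y w)).card - 1 := Finset.pred_card_le_card_erase
          have h2 : (((s.filter (fun w => G.Adj y w)).erase v0).erase x).card ≥
              ((s.filter (fun w => G.Adj y w)).erase v0).card - 1 :=
            Finset.pred_card_le_card_erase
          have h3 := hdeg3 y hys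
          have : dd G s y = (s.filter (fun w => G.Adj y w)).card := rfl
          omega
        rw [Finset.mem_erase, Finset.mem_erase, Finset.mem_filter] at hz
        obtain ⟨hzx, hzv0, hzs, hyz⟩ := hz
        have hL0 : n - 4 ≤ (((N.erase x).erase y).erase z).card := by
          have h1 : (N.erase x).card ≥ N.card - 1 := Finset.pred_card_le_card_erase
          have h2 : ((N.erase x).erase y).card ≥ (N.erase x).card - 1 :=
            Finset.pred_card_le_card_erase
          have h3 : (((N.erase x).erase y).erase z).card ≥ ((N.erase x).erase y).card - 1 :=
            Finset.pred_card_le_card_erase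
          omega
        obtain ⟨L, hLsub, hLcard⟩ := Finset.exists_subset_card_eq hL0
        have hLN : L ⊆ N := hLsub.trans ((Finset.erase_subset _ _).trans
          ((Finset.erase_subset _ _).trans (Finset.erase_subset _ _)))
        refine emb_lemma hn v0 x y z L hLcard hv0x.ne (Ne.symm hyv0) (Ne.symm hzv0)
          hxy.ne (Ne.symm hzx) hyz.ne ?_ (fun l hl => hmemN l (hLN hl)) hv0x hxy hyz
        intro l hl
        have h1 := hLsub hl
        rw [Finset.mem_erase, Finset.mem_erase, Finset.mem_erase] at h1
        exact ⟨fun hc => hv0N (hc ▸ hLN hl), h1.2.2.1, h1.2.1, h1.1⟩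
      · -- degree exactly n - 2 : find an exit from the closed neighborhood
        have hdeq : dd G s v0 = n - 2 := by omega
        have hexit : ∃ xx ∈ N, ∃ yy ∈ s, yy ∉ N ∧ yy ≠ v0 ∧ G.Adj xx yy := by
          by_contra hno
          push_neg at hno
          have hsub : ∀ b, Rin G s v0 b → b ∈ insert v0 N := by
            intro b hbr
            induction hbr with
            | refl => exact Finset.mem_insert_self _ _
            | @tail b c hab hbc ih =>
                rcases Finset.mem_insert.1 ih with h | h
                · subst h
                  exact Finset.mem_insert_of_mem
                    (Finset.mem_filter.2 ⟨hbc.2.1, hbc.2.2⟩)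
                · by_cases hcN : c ∈ N
                  · exact Finset.mem_insert_of_mem hcN
                  · by_cases hcv : c = v0
                    · exact hcv ▸ Finset.mem_insert_self _ _
                    · exact absurd hbc.2.2 (hno b h c hbc.2.1 hcN hcv)
          have hss : s ⊆ insert v0 N := fun b hb => hsub b (hconn v0 hv0s b hb)
          have hc1 : s.card ≤ N.card + 1 :=
            le_trans (Finset.card_le_card hss) (Finset.card_insert_le _ _)
          omega
        obtain ⟨xx, hxxN, yy, hyys, hyyN, hyyv0, hXY⟩ := hexit
        have hxxs : xx ∈ s := hNsub hxxN
        obtain ⟨z, hz⟩ : (((s.filter (fun w => G.Adj yy w)).erase v0).erase xx).Nonempty := by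
          apply Finset.card_pos.1
          have h1 : ((s.filter (fun w => G.Adj yy w)).erase v0).card ≥
              (s.filter (fun w => G.Adj yy w)).card - 1 := Finset.pred_card_le_card_erase
          have h2 : (((s.filter (fun w => G.Adj yy w)).erase v0).erase xx).card ≥
              ((s.filter (fun w => G.Adj yy w)).erase v0).card - 1 :=
            Finset.pred_card_le_card_erase
          have h3 := hdeg3 yy hyys
          have : dd G s yy = (s.filter (fun w => G.Adj yy w)).card := rfl
          omega
        rw [Finset.mem_erase, Finset.mem_erase, Finset.mem_filter] at hz
        obtain ⟨hzxx, hzv0, hzs, hyz⟩ := hz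
        have hL0 : n - 4 ≤ ((N.erase xx).erase z).card := by
          have h1 : (N.erase xx).card ≥ N.card - 1 := Finset.pred_card_le_card_erase
          have h2 : ((N.erase xx).erase z).card ≥ (N.erase xx).card - 1 :=
            Finset.pred_card_le_card_erase
          omega
        obtain ⟨L, hLsub, hLcard⟩ := Finset.exists_subset_card_eq hL0
        have hLN : L ⊆ N := hLsub.trans ((Finset.erase_subset _ _).trans
          (Finset.erase_subset _ _))
        have hv0xx : G.Adj v0 xx := hmemN xx hxxN
        refine emb_lemma hn v0 xx yy z L hLcard hv0xx.ne (Ne.symm hyyv0) (Ne.symm hzv0)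
          hXY.ne (Ne.symm hzxx) hyz.ne ?_ (fun l hl => hmemN l (hLN hl)) hv0xx hXY hyz
        intro l hl
        have h1 := hLsub hl
        rw [Finset.mem_erase, Finset.mem_erase] at h1
        exact ⟨fun hc => hv0N (hc ▸ hLN hl), h1.2.1, fun hc => hyyN (hc ▸ hLN hl), h1.1⟩


/-- Global bound: any `T_n^*`-free graph satisfies the bound, with slack unless all
components have exactly `n-1` vertices. -/
lemma lemQ {n : ℕ} (hn : 6 ≤ n) (hfree : ¬ ContainsCopy G (TnStar n)) :
    ∀ k (s : Finset (Fin p)), s.card ≤ k →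
      Ds G s + (n - 2) ≤ (n - 2) * s.card ∨
        (Ds G s ≤ (n - 2) * s.card ∧ s.card % (n - 1) = 0) := by
  intro k
  induction k with
  | zero =>
      intro s hs
      rw [Finset.card_eq_zero.1 (Nat.le_zero.1 hs)]
      right
      constructor
      · unfold Ds; simp
      · simp
  | succ k ih =>
      intro s hsk
      rcases Finset.eq_empty_or_nonempty s with rfl | ⟨x, hx⟩
      · right
        constructor
        · unfold Ds; simp
        · simp
      · set t := comp G s x with htdef
        have hts : t ⊆ s := comp_subset
        have hxt : x ∈ t := mem_comp_self hx
        have htne : 1 ≤ t.card := Finset.card_pos.2 ⟨x, hxt⟩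
        have hcl : ∀ a ∈ t, ∀ b ∈ s, G.Adj a b → b ∈ t := fun a ha b hb hab =>
          comp_closed ha hb hab
        have hsplit := Ds_split hts hcl
        have hcards : t.card + (s \ t).card = s.card := by
          have := Finset.card_sdiff_add_card_eq_card hts
          omega
        have hmul : (n - 2) * s.card = (n - 2) * t.card + (n - 2) * (s \ t).card := by
          rw [← Nat.mul_add, hcards]
        have hIH := ih (s \ t) (by omega)
        have htB : (Ds G t + (n - 2) ≤ (n - 2) * t.card) ∨ t.card = n - 1 := by
          by_cases htn : n ≤ t.card
          · exact Or.inl (lemD hn hfree t.card t le_rfl (conn_comp hx) htn)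
          · by_cases h9 : t.card = n - 1
            · exact Or.inr h9
            · left
              obtain ⟨a, ha⟩ : ∃ a, t.card = a + 1 := ⟨t.card - 1, by omega⟩
              have ha2 : a + 1 ≤ n - 2 := by omega
              have h3 : Ds G t ≤ (n - 2) * a := le_trans (Ds_le t) (by
                rw [ha]
                simp only [Nat.add_sub_cancel]
                exact Nat.mul_le_mul_right a ha2)
              have hmt : (n - 2) * t.card = (n - 2) * a + (n - 2) := by
                rw [ha, Nat.mul_add, Nat.mul_one]
              omega
        rcases htB with htB | htc
        · rcases hIH with hu | ⟨hu1, _⟩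
          · left; omega
          · left; omega
        · have hDst : Ds G t ≤ (n - 2) * t.card := by
            have h2 : t.card - 1 ≤ n - 2 := by omega
            calc Ds G t ≤ t.card * (t.card - 1) := Ds_le t
              _ ≤ t.card * (n - 2) := Nat.mul_le_mul_left _ h2
              _ = (n - 2) * t.card := Nat.mul_comm _ _
          rcases hIH with hu | ⟨hu1, hu2⟩
          · left; omega
          · right
            refine ⟨by omega, ?_⟩
            rw [← hcards, htc, Nat.add_mod_left]
            exact hu2

lemma two_mul_card_edges (G : SimpleGraph (Fin p)) :
    2 * Nat.card G.edgeSet = Ds G Finset.univ := by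
  have h1 : Nat.card ↥G.edgeSet = Fintype.card ↥G.edgeSet := Nat.card_eq_fintype_card
  have h2 : G.edgeFinset.card = Fintype.card ↥G.edgeSet := Set.toFinset_card _
  have h3 := SimpleGraph.sum_degrees_eq_twice_card_edges G
  have h4 : Ds G Finset.univ = ∑ v, G.degree v := by
    unfold Ds dd
    refine Finset.sum_congr rfl fun v _ => ?_
    rw [← SimpleGraph.neighborFinset_eq_filter]
    rfl
  omega


lemma div_eq_iff_bounds {k a B : ℕ} (hk : 0 < k) : a / k = B ↔ B * k ≤ a ∧ a < B * k + k := by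
  have h1 := Nat.div_add_mod a k
  have h2 := Nat.mod_lt a hk
  constructor
  · rintro rfl
    have h3 : a / k * k = k * (a / k) := Nat.mul_comm _ _
    omega
  · rintro ⟨hb1, hb2⟩
    have h4 : B ≤ a / k := (Nat.le_div_iff_mul_le hk).2 hb1
    have h5 : a / k < B + 1 := by
      rw [Nat.div_lt_iff_lt_mul hk]
      have h6 : (B + 1) * k = B * k + k := by rw [Nat.add_mul, Nat.one_mul]
      omega
    omega

/-- The extremal construction: disjoint copies of `K_{n-1}` (plus one extra vertex). -/
def blkG (p n : ℕ) : SimpleGraph (Fin p) :=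
  SimpleGraph.fromRel (fun a b => a.val / (n - 1) = b.val / (n - 1))

lemma blkG_adj {n : ℕ} {a b : Fin p} :
    (blkG p n).Adj a b ↔ a ≠ b ∧ a.val / (n - 1) = b.val / (n - 1) := by
  unfold blkG
  rw [SimpleGraph.fromRel_adj]
  constructor
  · rintro ⟨h, h2 | h2⟩
    · exact ⟨h, h2⟩
    · exact ⟨h, h2.symm⟩
  · rintro ⟨h1, h2⟩
    exact ⟨h1, Or.inl h2⟩

lemma blkG_free {n : ℕ} (hn : 6 ≤ n) : ¬ ContainsCopy (blkG p n) (TnStar n) := by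
  rintro ⟨f, hf⟩
  have h0 : (0 : ℕ) < n := by omega
  set B := (f ⟨0, h0⟩).val / (n - 1) with hB
  have hT : ∀ a b : Fin n, a ≠ b →
      ((a.val = 0 ∧ 1 ≤ b.val ∧ b.val ≤ n - 3) ∨ (a.val = n - 3 ∧ b.val = n - 2) ∨
        (a.val = n - 2 ∧ b.val = n - 1)) → (TnStar n).Adj a b := by
    intro a b hne hrel
    unfold TnStar
    rw [SimpleGraph.fromRel_adj]
    exact ⟨hne, Or.inl hrel⟩
  have hA : ∀ i : Fin n, 1 ≤ i.val → i.val ≤ n - 3 → (f i).val / (n - 1) = B := by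
    intro i h1 h2
    have hne : (⟨0, h0⟩ : Fin n) ≠ i := by
      intro hc
      have := congrArg Fin.val hc
      simp at this
      omega
    have hadj := hf ⟨0, h0⟩ i (hT _ _ hne (Or.inl ⟨rfl, h1, h2⟩))
    exact (blkG_adj.1 hadj).2.symm
  have h3 : (f ⟨n - 3, by omega⟩).val / (n - 1) = B := hA _ (by simp; omega) (by simp)
  have h2 : (f ⟨n - 2, by omega⟩).val / (n - 1) = B := by
    have hne : (⟨n - 3, by omega⟩ : Fin n) ≠ ⟨n - 2, by omega⟩ := by
      intro hc
      have := congrArg Fin.val hc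
      simp at this
      omega
    have hadj := hf _ _ (hT ⟨n - 3, by omega⟩ ⟨n - 2, by omega⟩ hne (Or.inr (Or.inl ⟨rfl, rfl⟩)))
    rw [← (blkG_adj.1 hadj).2]
    exact h3
  have h1 : (f ⟨n - 1, by omega⟩).val / (n - 1) = B := by
    have hne : (⟨n - 2, by omega⟩ : Fin n) ≠ ⟨n - 1, by omega⟩ := by
      intro hc
      have := congrArg Fin.val hc
      simp at this
      omega
    have hadj := hf _ _ (hT ⟨n - 2, by omega⟩ ⟨n - 1, by omega⟩ hne
      (Or.inr (Or.inr ⟨rfl, rfl⟩)))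
    rw [← (blkG_adj.1 hadj).2]
    exact h2
  have hblk : ∀ i : Fin n, (f i).val / (n - 1) = B := by
    intro i
    have hi := i.isLt
    rcases (show i.val = 0 ∨ (1 ≤ i.val ∧ i.val ≤ n - 3) ∨ i.val = n - 2 ∨ i.val = n - 1
        from by omega) with h | ⟨ha, hb⟩ | h | h
    · have : i = ⟨0, h0⟩ := Fin.ext h
      rw [this]
    · exact hA i ha hb
    · have : i = ⟨n - 2, by omega⟩ := Fin.ext h
      rw [this]; exact h2
    · have : i = ⟨n - 1, by omega⟩ := Fin.ext h
      rw [this]; exact h1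
  -- all `n` distinct images live in a block of size ≤ n - 1
  have hcard : (Finset.univ.image (fun i : Fin n => f i)).card = n := by
    rw [Finset.card_image_of_injective _ f.injective, Finset.card_univ, Fintype.card_fin]
  have hsub : (Finset.univ.image (fun i : Fin n => f i)) ⊆
      Finset.univ.filter (fun w : Fin p => w.val / (n - 1) = B) := by
    intro w hw
    obtain ⟨i, _, rfl⟩ := Finset.mem_image.1 hw
    exact Finset.mem_filter.2 ⟨Finset.mem_univ _, hblk i⟩
  have hfil : (Finset.univ.filter (fun w : Fin p => w.val / (n - 1) = B)).card ≤ n - 1 := by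
    have := Finset.card_le_card_of_injOn
      (s := Finset.univ.filter (fun w : Fin p => w.val / (n - 1) = B))
      (t := Finset.range (n - 1))
      (fun w : Fin p => w.val % (n - 1)) ?_ ?_
    · rw [Finset.card_range] at this
      exact this
    · intro w _
      exact Finset.mem_range.2 (Nat.mod_lt _ (by omega))
    · intro a ha b hb hmod
      simp only [Finset.mem_coe, Finset.mem_filter] at ha hb
      have hda := Nat.div_add_mod a.val (n - 1)
      have hdb := Nat.div_add_mod b.val (n - 1)
      apply Fin.ext
      rw [ha.2] at hda
      rw [hb.2] at hdb
      simp only at hmod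
      omega
  have := Finset.card_le_card hsub
  omega

lemma blkG_dd {n : ℕ} (hn : 6 ≤ n) (hp : n ≤ p) (hmod : p % (n - 1) = 1) (v : Fin p) :
    dd (blkG p n) Finset.univ v = if v.val = p - 1 then 0 else n - 2 := by
  have hk : 0 < n - 1 := by omega
  set k := n - 1 with hkdef
  set q := p / k with hq
  have hqk : k * q + 1 = p := by
    have h1 := Nat.div_add_mod p k
    rw [← hq] at h1
    have h2 : p % k = 1 := hmod
    omega
  have hvlt := v.isLt
  by_cases hv : v.val = p - 1
  · rw [if_pos hv]
    unfold dd
    rw [Finset.card_eq_zero]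
    rw [Finset.eq_empty_iff_forall_notMem]
    intro b hb
    rw [Finset.mem_filter] at hb
    obtain ⟨hbv, hsame⟩ := blkG_adj.1 hb.2
    have hvblk : v.val / k = q := by
      rw [div_eq_iff_bounds hk]
      have : q * k = k * q := Nat.mul_comm _ _
      omega
    have hbblk : b.val / k = q := by rw [← hsame, hvblk]
    rw [div_eq_iff_bounds hk] at hbblk
    have hblt := b.isLt
    have : q * k = k * q := Nat.mul_comm _ _
    have hbval : b.val = v.val := by omega
    exact hbv (Fin.ext hbval).symm
  · rw [if_neg hv]
    set B := v.val / k with hBdef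
    have hBq : B < q := by
      rw [hBdef, Nat.div_lt_iff_lt_mul hk]
      have : q * k = k * q := Nat.mul_comm _ _
      omega
    have hbound : ∀ m ∈ Finset.Ico (B * k) (B * k + k), m < p := by
      intro m hm
      rw [Finset.mem_Ico] at hm
      have h1 : B + 1 ≤ q := hBq
      have h2 : (B + 1) * k ≤ q * k := Nat.mul_le_mul_right k h1
      have h3 : (B + 1) * k = B * k + k := by rw [Nat.add_mul, Nat.one_mul]
      have : q * k = k * q := Nat.mul_comm _ _
      omega
    have heq : Finset.univ.filter (fun w => (blkG p n).Adj v w) =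
        ((Finset.Ico (B * k) (B * k + k)).attachFin hbound).erase v := by
      ext b
      rw [Finset.mem_filter, Finset.mem_erase, Finset.mem_attachFin, Finset.mem_Ico]
      constructor
      · rintro ⟨_, hadj⟩
        obtain ⟨hne, hsame⟩ := blkG_adj.1 hadj
        have : b.val / k = B := by rw [← hsame]
        rw [div_eq_iff_bounds hk] at this
        exact ⟨Ne.symm hne, this⟩
      · rintro ⟨hne, hmem⟩
        refine ⟨Finset.mem_univ _, blkG_adj.2 ⟨Ne.symm hne, ?_⟩⟩
        have : b.val / k = B := by rw [div_eq_iff_bounds hk]; exact hmem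
        rw [this]
    have hvmem : v ∈ (Finset.Ico (B * k) (B * k + k)).attachFin hbound := by
      rw [Finset.mem_attachFin, Finset.mem_Ico]
      have h1 := Nat.div_add_mod v.val k
      rw [← hBdef] at h1
      have h2 := Nat.mod_lt v.val hk
      have : B * k = k * B := Nat.mul_comm _ _
      omega
    unfold dd
    rw [heq, Finset.card_erase_of_mem hvmem, Finset.card_attachFin, Nat.card_Ico]
    omega

lemma blkG_count {n : ℕ} (hn : 6 ≤ n) (hp : n ≤ p) (hmod : p % (n - 1) = 1) :
    Nat.card (blkG p n).edgeSet = (n - 2) * (p - 1) / 2 := by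
  have hppos : 0 < p := by omega
  have hDs : Ds (blkG p n) Finset.univ = (p - 1) * (n - 2) := by
    unfold Ds
    rw [Finset.sum_congr rfl (fun v _ => blkG_dd hn hp hmod v), Finset.sum_ite,
      Finset.sum_const, Finset.sum_const, smul_eq_mul, smul_eq_mul, Nat.mul_zero, Nat.zero_add]
    congr 1
    have hsingle : Finset.univ.filter (fun v : Fin p => v.val = p - 1) = {⟨p - 1, by omega⟩} := by
      ext w
      rw [Finset.mem_filter, Finset.mem_singleton]
      constructor
      · rintro ⟨_, h⟩; exact Fin.ext h
      · rintro rfl; exact ⟨Finset.mem_univ _, rfl⟩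
    have hsplit := Finset.card_filter_add_card_filter_not
      (s := (Finset.univ : Finset (Fin p))) (p := fun v : Fin p => v.val = p - 1)
    have hcard1 : (Finset.univ.filter (fun v : Fin p => v.val = p - 1)).card = 1 := by
      rw [hsingle]; simp
    have hcardu : (Finset.univ : Finset (Fin p)).card = p := by simp
    have : (Finset.univ.filter (fun v : Fin p => ¬ v.val = p - 1)).card = p - 1 := by
      omega
    rw [this]
  have h2 := two_mul_card_edges (blkG p n)
  have hcomm : (p - 1) * (n - 2) = (n - 2) * (p - 1) := Nat.mul_comm _ _
  omega

end Stmt10Aux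

theorem stmt10 (p n : ℕ) (hn : 6 ≤ n) (hp : n ≤ p) (hmod : p % (n - 1) = 1) :
    exNum p (TnStar n) = (n - 2) * (p - 1) / 2 := by
  unfold exNum
  apply IsGreatest.csSup_eq
  constructor
  · exact ⟨Stmt10Aux.blkG p n, Stmt10Aux.blkG_free hn, Stmt10Aux.blkG_count hn hp hmod⟩
  · rintro m ⟨G, hGfree, rfl⟩
    have h2 := Stmt10Aux.two_mul_card_edges G
    have hcardu : (Finset.univ : Finset (Fin p)).card = p := by simp
    have hQ := Stmt10Aux.lemQ (G := G) hn hGfree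
      (Finset.univ : Finset (Fin p)).card Finset.univ le_rfl
    rw [hcardu] at hQ
    rcases hQ with h | ⟨_, hmod0⟩
    · have hsplit : (n - 2) * p = (n - 2) * (p - 1) + (n - 2) := by
        obtain ⟨r, hr⟩ : ∃ r, p = r + 1 := ⟨p - 1, by omega⟩
        rw [hr, Nat.add_sub_cancel, Nat.mul_add, Nat.mul_one]
      omega
    · omega
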